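/- arXiv:math/9811174 — 3 statements merged into one kernel-verified Lean document; each statement's English description precedes it below -/
import Mathlib

section
/- Define a sequence of polynomials P_n(θ) recursively by P_0(θ) = 1 and P_n(θ) = ∫_0^1 ( ∫_θ^ψ P_{n-1}(t) dt ) dψ. Then for all n ≥ 0, P_n(θ) = (1/n!) B̂_n(-θ), where B̂_n(x) = Σ_{k=0}^n binom(n,k) (-1)^{n-k} B_{n-k} x^k. -/
open Nat Finset intervalIntegral

noncomputable def Bpoly (n : ℕ) : Polynomial ℝ :=
  (Polynomial.bernoulli n).map (algebraMap ℚ ℝ)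

lemma Bpoly_hasDerivAt (n : ℕ) (x : ℝ) :
    HasDerivAt (fun t => (Bpoly (n+1)).eval t) ((n+1 : ℝ) * (Bpoly n).eval x) x := by
  have h := (Bpoly (n+1)).hasDerivAt x
  have : (Bpoly (n+1)).derivative = ((n:ℝ)+1) • Bpoly n := by
    simp only [Bpoly, Polynomial.derivative_map]
    rw [Polynomial.derivative_bernoulli_add_one]
    rw [Polynomial.map_mul]
    simp [Polynomial.smul_eq_C_mul]
  rw [this] at h
  simpa using h

lemma integral_Bpoly (n : ℕ) (a b : ℝ) :
    ∫ t in a..b, (Bpoly n).eval t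
      = ((Bpoly (n+1)).eval b - (Bpoly (n+1)).eval a) / (n+1) := by
  have h : ∀ x ∈ Set.uIcc a b, HasDerivAt (fun t => (Bpoly (n+1)).eval t / (n+1))
      ((Bpoly n).eval x) x := by
    intro x _
    have := (Bpoly_hasDerivAt n x).div_const ((n:ℝ)+1)
    have hne : ((n:ℝ)+1) ≠ 0 := by positivity
    rw [mul_div_assoc] at this
    field_simp at this
    convert this using 1
  rw [intervalIntegral.integral_eq_sub_of_hasDerivAt h
    (Polynomial.continuous _ |>.intervalIntegrable a b)]
  ring

lemma Bpoly_eval_one_sub_eval_zero (m : ℕ) (hm : m ≠ 1) :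
    (Bpoly m).eval 1 - (Bpoly m).eval 0 = 0 := by
  have h1 : (Bpoly m).eval 1 = ((bernoulli' m : ℚ) : ℝ) := by
    rw [Bpoly, Polynomial.eval_one_map, Polynomial.bernoulli_eval_one]; norm_num
  have h0 : (Bpoly m).eval 0 = ((bernoulli m : ℚ) : ℝ) := by
    rw [Bpoly, Polynomial.eval_zero_map, Polynomial.bernoulli_eval_zero]; norm_num
  rw [h1, h0, bernoulli_eq_bernoulli'_of_ne_one hm, sub_self]

lemma Q_rec (n : ℕ) (θ : ℝ) :
    (∫ ψ in (0:ℝ)..1, ∫ t in θ..ψ, ((-1)^n / (n ! : ℝ)) * (Bpoly n).eval t)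
      = ((-1)^(n+1) / ((n+1)! : ℝ)) * (Bpoly (n+1)).eval θ := by
  have hinner : ∀ ψ : ℝ, (∫ t in θ..ψ, ((-1)^n / (n ! : ℝ)) * (Bpoly n).eval t)
      = ((-1)^n / (n ! : ℝ)) * (((Bpoly (n+1)).eval ψ - (Bpoly (n+1)).eval θ) / (n+1)) := by
    intro ψ
    rw [intervalIntegral.integral_const_mul, integral_Bpoly]
  simp_rw [hinner]
  rw [intervalIntegral.integral_const_mul]
  have : (∫ ψ in (0:ℝ)..1, ((Bpoly (n+1)).eval ψ - (Bpoly (n+1)).eval θ) / (n+1))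
      = ((∫ ψ in (0:ℝ)..1, (Bpoly (n+1)).eval ψ) - (Bpoly (n+1)).eval θ) / (n+1) := by
    rw [intervalIntegral.integral_div, intervalIntegral.integral_sub
      (Polynomial.continuous _ |>.intervalIntegrable 0 1) (intervalIntegrable_const)]
    simp
  rw [this, integral_Bpoly, Bpoly_eval_one_sub_eval_zero (n+2) (by omega)]
  have h1 : ((n:ℝ)+1) ≠ 0 := by positivity
  have h2 : ((n ! : ℕ) : ℝ) ≠ 0 := by exact_mod_cast Nat.factorial_ne_zero n
  rw [Nat.factorial_succ]
  push_cast
  field_simp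
  ring

lemma Q_eq_sum (n : ℕ) (θ : ℝ) :
    (1 / (n ! : ℝ)) *
        ∑ k ∈ Finset.range (n + 1),
          (n.choose k : ℝ) * ((-1) ^ (n - k) * ((bernoulli (n - k) : ℚ) : ℝ)) * (-θ) ^ k
      = ((-1)^n / (n ! : ℝ)) * (Bpoly n).eval θ := by
  have : (Bpoly n).eval θ = ∑ k ∈ Finset.range (n + 1),
      ((bernoulli (n - k) : ℚ) : ℝ) * (n.choose k : ℝ) * θ ^ k := by
    simp [Bpoly, Polynomial.bernoulli_def, Polynomial.eval_finset_sum, Polynomial.eval_monomial]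
  rw [this, mul_sum, mul_sum]
  refine Finset.sum_congr rfl fun k hk => ?_
  rw [Finset.mem_range] at hk
  have hkn : k ≤ n := by omega
  have hsign : ((-1:ℝ)) ^ (n - k) * (-1)^k = (-1)^n := by
    rw [← pow_add, Nat.sub_add_cancel hkn]
  linear_combination ((1 / (n ! : ℝ)) * (n.choose k : ℝ) *
    ((bernoulli (n - k) : ℚ) : ℝ) * θ ^ k) * hsign

/-- If `P_0(θ) = 1` and `P_n(θ) = ∫_0^1 (∫_θ^ψ P_{n-1}(t) dt) dψ`, then
`P_n(θ) = (1/n!) B̂_n(-θ)` where `B̂_n(x) = ∑_{k=0}^n binom(n,k) (-1)^{n-k} B_{n-k} x^k`. -/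
theorem kontsevich_weight_polynomials (P : ℕ → ℝ → ℝ)
    (h0 : ∀ θ : ℝ, P 0 θ = 1)
    (hrec : ∀ (n : ℕ) (θ : ℝ),
      P (n + 1) θ = ∫ ψ in (0:ℝ)..1, ∫ t in θ..ψ, P n t) :
    ∀ (n : ℕ) (θ : ℝ),
      P n θ = (1 / (n ! : ℝ)) *
        ∑ k ∈ Finset.range (n + 1),
          (n.choose k : ℝ) * ((-1) ^ (n - k) * ((bernoulli (n - k) : ℚ) : ℝ)) * (-θ) ^ k := by
  have key : ∀ (n : ℕ) (θ : ℝ), P n θ = ((-1)^n / (n ! : ℝ)) * (Bpoly n).eval θ := by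
    intro n
    induction n with
    | zero =>
      intro θ
      simp [h0, Bpoly, Polynomial.bernoulli]
    | succ n ih =>
      intro θ
      rw [hrec n θ, ← Q_rec n θ]
      congr 1
      ext ψ
      congr 1
      ext t
      exact ih t
  intro n θ
  rw [key n θ, Q_eq_sum]
end

section
/- Let g be a Lie algebra, σ: S(g) → U(g) the symmetrization map, X, Y ∈ g, n ∈ ℕ. Then in U(g): X^{∘n} ∘ Y = Σ_{k=0}^{n} (n! B̂_k)/(k!(n-k)!) · σ( (X)^{n-k} · (ad_X)^k(Y) ), where B̂_k = (-1)^k B_k are the modified Bernoulli numbers. -/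
open Nat Finset

noncomputable section

/-- The symmetrization relation on the tensor algebra: `x ⊗ y ~ y ⊗ x`. -/
def symRel (k : Type*) [CommRing k] (L : Type*) [AddCommGroup L] [Module k L]
    (a b : TensorAlgebra k L) : Prop :=
  ∃ x y : L, a = TensorAlgebra.ι k x * TensorAlgebra.ι k y ∧
    b = TensorAlgebra.ι k y * TensorAlgebra.ι k x

/-- The symmetric algebra `S(g)`, as a quotient of the tensor algebra. -/
abbrev SymmAlg (k : Type*) [CommRing k] (L : Type*) [AddCommGroup L] [Module k L] :=
  RingQuot (symRel k L)

/-- The canonical inclusion `g → S(g)`. -/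
def ιSym (k : Type*) [CommRing k] (L : Type*) [AddCommGroup L] [Module k L] (x : L) :
    SymmAlg k L :=
  RingQuot.mkAlgHom k (symRel k L) (TensorAlgebra.ι k x)

/-- The canonical inclusion `g → U(g)`. -/
def ιUE (k : Type*) [CommRing k] (L : Type*) [LieRing L] [LieAlgebra k L] (x : L) :
    UniversalEnvelopingAlgebra k L :=
  UniversalEnvelopingAlgebra.ι k x

section AuxLemmas

lemma ofFn_ite_prod {A : Type*} [Monoid A] (a b : A) :
    ∀ (m : ℕ) (i : Fin (m+1)),
    (List.ofFn (fun j : Fin (m+1) => if j = i then b else a)).prod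
      = a ^ (i : ℕ) * b * a ^ (m - (i : ℕ)) := by
  intro m
  induction m with
  | zero => intro i; rw [Fin.eq_zero i]; simp [List.ofFn_succ]
  | succ m ih =>
    intro i
    rw [List.ofFn_succ]
    rcases Fin.eq_zero_or_eq_succ i with h | ⟨i', rfl⟩
    · subst h
      simp only [if_pos rfl, List.prod_cons]
      have : (fun j : Fin (m+1) => if (Fin.succ j) = (0 : Fin (m+2)) then b else a)
          = fun _ => a := by
        funext j; simp [Fin.succ_ne_zero]
      rw [this]
      simp [List.prod_ofFn, ← _root_.pow_succ']
    · have h0 : ((0 : Fin (m+2)) = i'.succ) = False := by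
        simp [eq_comm, Fin.succ_ne_zero]
      simp only [h0, if_false, List.prod_cons]
      have : (fun j : Fin (m+1) => if (Fin.succ j) = i'.succ then b else a)
          = fun j => if j = i' then b else a := by
        funext j; simp [Fin.succ_inj]
      rw [this, ih i']
      rw [← mul_assoc, ← mul_assoc, ← _root_.pow_succ']
      simp only [Fin.val_succ]
      congr 2
      omega

variable (k : Type*) [Field k] [CharZero k] (L : Type*) [LieRing L] [LieAlgebra k L]

lemma ue_comm (X z : L) :
    ιUE k L X * ιUE k L z = ιUE k L z * ιUE k L X + ιUE k L ⁅X, z⁆ := by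
  have : ιUE k L ⁅X, z⁆ = ⁅ιUE k L X, ιUE k L z⁆ := by
    simpa [ιUE] using (UniversalEnvelopingAlgebra.ι k (R := k) (L := L)).map_lie X z
  rw [this, Ring.lie_def]
  abel

lemma pow_ue_mul (X z : L) (m : ℕ) :
    (ιUE k L X) ^ m * ιUE k L z
      = ∑ t ∈ range (m+1),
          m.choose t • (ιUE k L ((fun w => ⁅X, w⁆)^[t] z) * (ιUE k L X) ^ (m-t)) := by
  induction m with
  | zero => simp
  | succ m ih =>
    set u := ιUE k L X
    set g : ℕ → UniversalEnvelopingAlgebra k L := fun t => ιUE k L ((fun w => ⁅X, w⁆)^[t] z)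
      with hg
    have hcomm : ∀ t, u * g t = g t * u + g (t+1) := by
      intro t
      rw [hg]
      simp only
      rw [Function.iterate_succ_apply']
      exact ue_comm k L X _
    rw [_root_.pow_succ', mul_assoc, ih, Finset.mul_sum]
    have step : ∀ t ∈ range (m+1),
        u * (m.choose t • (g t * u ^ (m-t)))
          = m.choose t • (g t * u ^ (m+1-t)) + m.choose t • (g (t+1) * u ^ (m-t)) := by
      intro t ht
      rw [mem_range] at ht
      rw [mul_smul_comm, ← mul_assoc, hcomm t, add_mul, ← smul_add]
      congr 2
      rw [mul_assoc, ← _root_.pow_succ']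
      congr 2
      omega
    rw [Finset.sum_congr rfl step, Finset.sum_add_distrib]
    rw [Finset.sum_range_succ' (fun t => (m+1).choose t • (g t * u ^ (m+1-t))) (m+1)]
    simp only [Nat.choose_succ_succ, add_smul, Nat.choose_zero_right, one_smul, Nat.sub_zero]
    rw [Finset.sum_add_distrib]
    have e1 : ∑ t ∈ range (m+1), m.choose (t+1) • (g (t+1) * u ^ (m+1-(t+1)))
        = ∑ t ∈ range (m+1), m.choose t • (g t * u ^ (m+1-t)) - 1 • (g 0 * u ^ (m+1)) := by
      rw [Finset.sum_range_succ' (fun t => m.choose t • (g t * u ^ (m+1-t))) m,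
          Finset.sum_range_succ (fun t => m.choose (t+1) • (g (t+1) * u ^ (m+1-(t+1)))) m]
      simp
    rw [e1]
    have e2 : ∀ t ∈ range (m+1), m.choose t • (g (t+1) * u ^ (m+1-(t+1)))
        = m.choose t • (g (t+1) * u ^ (m-t)) := by
      intro t ht; rw [Nat.succ_sub_succ]
    rw [Finset.sum_congr rfl e2]
    abel

lemma sym_eval (σ : SymmAlg k L ≃ₗ[k] UniversalEnvelopingAlgebra k L)
    (hσ : ∀ (n : ℕ) (f : Fin n → L),
      σ ((List.ofFn fun m => ιSym k L (f m)).prod)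
        = ((n ! : k)⁻¹) •
            ∑ π : Equiv.Perm (Fin n), (List.ofFn fun m => ιUE k L (f (π m))).prod)
    (X z : L) (m : ℕ) :
    σ ((ιSym k L X) ^ m * ιSym k L z)
      = (((m+1 : ℕ) : k))⁻¹ • ∑ i : Fin (m+1),
          (ιUE k L X) ^ (i : ℕ) * ιUE k L z * (ιUE k L X) ^ (m - (i : ℕ)) := by
  set u := ιUE k L X
  set v := ιUE k L z
  set G : Fin (m+1) → UniversalEnvelopingAlgebra k L :=
    fun i => u ^ (i : ℕ) * v * u ^ (m - (i : ℕ)) with hG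
  set f : Fin (m+1) → L := fun i => if i = Fin.last m then z else X with hf
  have harg : (ιSym k L X) ^ m * ιSym k L z = (List.ofFn fun i => ιSym k L (f i)).prod := by
    have : (fun i => ιSym k L (f i))
        = fun i : Fin (m+1) => if i = Fin.last m then ιSym k L z else ιSym k L X := by
      funext i; rw [hf]; simp only [apply_ite (ιSym k L)]
    rw [this, ofFn_ite_prod]
    simp [Fin.val_last]
  have hterm : ∀ π : Equiv.Perm (Fin (m+1)),
      (List.ofFn fun i => ιUE k L (f (π i))).prod = G (π⁻¹ (Fin.last m)) := by
    intro π
    have : (fun i => ιUE k L (f (π i)))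
        = fun i : Fin (m+1) => if i = π⁻¹ (Fin.last m) then v else u := by
      funext i
      rw [hf]
      simp only [apply_ite (ιUE k L)]
      congr 1
      simp [Equiv.apply_eq_iff_eq_symm_apply, Equiv.Perm.inv_def]
    rw [this, ofFn_ite_prod, hG]
  rw [harg, hσ (m+1) f]
  rw [Finset.sum_congr rfl (fun π _ => hterm π)]
  have s1 : ∑ π : Equiv.Perm (Fin (m+1)), G (π⁻¹ (Fin.last m))
      = ∑ π : Equiv.Perm (Fin (m+1)), G (π (Fin.last m)) := by
    exact Fintype.sum_bijective (fun π => π⁻¹) (inv_involutive.bijective) _ _ (fun π => rfl)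
  have s2 : ∑ π : Equiv.Perm (Fin (m+1)), G (π (Fin.last m))
      = ∑ π : Equiv.Perm (Fin (m+1)), G (π 0) := by
    refine Fintype.sum_bijective (fun π => π * Equiv.swap 0 (Fin.last m))
      (Group.mulRight_bijective _) _ _ (fun π => ?_)
    simp [Equiv.Perm.mul_apply, Equiv.swap_apply_left]
  have s3 : ∑ π : Equiv.Perm (Fin (m+1)), G (π 0) = m ! • ∑ i : Fin (m+1), G i := by
    rw [← Equiv.sum_comp (Equiv.Perm.decomposeFin.symm :
        Fin (m+1) × Equiv.Perm (Fin m) ≃ Equiv.Perm (Fin (m+1))) (fun π => G (π 0))]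
    have hp : ∀ p : Fin (m+1) × Equiv.Perm (Fin m),
        G ((Equiv.Perm.decomposeFin.symm p) 0) = G p.1 := by
      rintro ⟨p, e⟩; rw [Equiv.Perm.decomposeFin_symm_apply_zero]
    rw [Finset.sum_congr rfl (fun p _ => hp p), Fintype.sum_prod_type]
    simp [Finset.sum_const, Fintype.card_perm, Fintype.card_fin, Finset.smul_sum]
  rw [s1, s2, s3]
  rw [smul_comm]
  congr 1
  rw [← Nat.cast_smul_eq_nsmul k, smul_smul]
  congr 1
  have hm : ((m ! : ℕ) : k) ≠ 0 := Nat.cast_ne_zero.mpr (Nat.factorial_ne_zero m)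
  have hm1 : (((m+1) : ℕ) : k) ≠ 0 := Nat.cast_ne_zero.mpr (Nat.succ_ne_zero m)
  rw [Nat.factorial_succ]
  push_cast
  field_simp

lemma sum_pow_mul (X z : L) (m : ℕ) :
    ∑ i : Fin (m+1), (ιUE k L X) ^ (i : ℕ) * ιUE k L z * (ιUE k L X) ^ (m - (i : ℕ))
      = ∑ t ∈ range (m+1), ((m+1).choose (t+1)) •
          (ιUE k L ((fun w => ⁅X, w⁆)^[t] z) * (ιUE k L X) ^ (m - t)) := by
  set u := ιUE k L X with hu
  set v := ιUE k L z with hv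
  set g : ℕ → UniversalEnvelopingAlgebra k L := fun t => ιUE k L ((fun w => ⁅X, w⁆)^[t] z)
    with hg
  rw [Fin.sum_univ_eq_sum_range (fun i => u ^ i * v * u ^ (m - i)) (m+1)]
  have h1 : ∀ i ∈ range (m+1), u ^ i * v * u ^ (m - i)
      = ∑ t ∈ range (i+1), i.choose t • (g t * u ^ (m - t)) := by
    intro i hi
    rw [mem_range] at hi
    rw [hu, hv, pow_ue_mul k L X z i, Finset.sum_mul]
    refine Finset.sum_congr rfl (fun t ht => ?_)
    rw [mem_range] at ht
    rw [smul_mul_assoc, mul_assoc, ← pow_add]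
    congr 3
    omega
  rw [Finset.sum_congr rfl h1]
  simp only [Finset.range_eq_Ico]
  rw [← Finset.sum_Ico_Ico_comm 0 (m+1) (fun t i => i.choose t • (g t * u ^ (m - t)))]
  refine Finset.sum_congr rfl (fun t ht => ?_)
  rw [← Finset.sum_smul]
  congr 1
  rw [Finset.Ico_add_one_right_eq_Icc, Nat.sum_Icc_choose]

end AuxLemmas


lemma coeff_identity (n r : ℕ) (hr : r ≤ n) :
    ∑ j ∈ range (r+1),
      ((n ! : ℚ) * ((-1) ^ j * bernoulli j)) / ((j ! : ℚ) * ((n - j)! : ℚ))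
        * (((n - j + 1 : ℕ) : ℚ))⁻¹ * (((n - j + 1).choose (r - j + 1) : ℕ) : ℚ)
      = (n.choose r : ℚ) := by
  have hterm : ∀ j ∈ range (r+1),
      ((n ! : ℚ) * ((-1) ^ j * bernoulli j)) / ((j ! : ℚ) * ((n - j)! : ℚ))
        * (((n - j + 1 : ℕ) : ℚ))⁻¹ * (((n - j + 1).choose (r - j + 1) : ℕ) : ℚ)
      = ((n ! : ℚ) / (((r+1)! : ℚ) * ((n - r)! : ℚ)))
          * (((r+1).choose j : ℚ) * bernoulli' j) := by
    intro j hj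
    rw [mem_range] at hj
    have hjr : j ≤ r := by omega
    have hb : ((-1 : ℚ)) ^ j * bernoulli j = bernoulli' j := by
      simp [bernoulli, ← mul_assoc, ← mul_pow]
    have h1 : (((n - j + 1).choose (r - j + 1) : ℕ) : ℚ)
        = ((n - j + 1)! : ℚ) / (((r - j + 1)! : ℚ) * ((n - r)! : ℚ)) := by
      rw [Nat.cast_choose ℚ (by omega : r - j + 1 ≤ n - j + 1)]
      have e : n - j + 1 - (r - j + 1) = n - r := by omega
      rw [e]
    have h2 : (((r+1).choose j : ℕ) : ℚ)
        = ((r+1)! : ℚ) / ((j ! : ℚ) * ((r - j + 1)! : ℚ)) := by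
      rw [Nat.cast_choose ℚ (by omega : j ≤ r + 1)]
      have e : r + 1 - j = r - j + 1 := by omega
      rw [e]
    have h3 : ((n - j + 1)! : ℚ) = ((n - j + 1 : ℕ) : ℚ) * ((n - j)! : ℚ) := by
      rw [Nat.factorial_succ]; push_cast; ring
    rw [hb, h1, h2, h3]
    have f1 : ((j ! : ℕ) : ℚ) ≠ 0 := Nat.cast_ne_zero.mpr (Nat.factorial_ne_zero _)
    have f2 : (((n-j) ! : ℕ) : ℚ) ≠ 0 := Nat.cast_ne_zero.mpr (Nat.factorial_ne_zero _)
    have f3 : (((r-j+1) ! : ℕ) : ℚ) ≠ 0 := Nat.cast_ne_zero.mpr (Nat.factorial_ne_zero _)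
    have f4 : (((n-r) ! : ℕ) : ℚ) ≠ 0 := Nat.cast_ne_zero.mpr (Nat.factorial_ne_zero _)
    have f5 : (((r+1) ! : ℕ) : ℚ) ≠ 0 := Nat.cast_ne_zero.mpr (Nat.factorial_ne_zero _)
    have f6 : (((n-j+1 : ℕ)) : ℚ) ≠ 0 := Nat.cast_ne_zero.mpr (by omega)
    field_simp
  rw [Finset.sum_congr rfl hterm, ← Finset.mul_sum, sum_bernoulli' (r+1)]
  rw [Nat.cast_choose ℚ hr, Nat.factorial_succ (r)]
  have f4 : (((n-r) ! : ℕ) : ℚ) ≠ 0 := Nat.cast_ne_zero.mpr (Nat.factorial_ne_zero _)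
  have f5 : ((r ! : ℕ) : ℚ) ≠ 0 := Nat.cast_ne_zero.mpr (Nat.factorial_ne_zero _)
  have f6 : ((r : ℚ) + 1) ≠ 0 := by positivity
  push_cast
  field_simp

/-- In `U(g)`: `X^{∘n} ∘ Y = ∑_{k=0}^{n} (n! B̂_k)/(k!(n-k)!) σ((X)^{n-k} · (ad_X)^k(Y))`,
where `σ` is the symmetrization map and `B̂_k = (-1)^k B_k` are the modified
Bernoulli numbers. -/
theorem pow_mul_eq_sum_modified_bernoulli_symmetrization
    (k : Type*) [Field k] [CharZero k] (L : Type*) [LieRing L] [LieAlgebra k L]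
    (σ : SymmAlg k L ≃ₗ[k] UniversalEnvelopingAlgebra k L)
    (hσ : ∀ (n : ℕ) (f : Fin n → L),
      σ ((List.ofFn fun m => ιSym k L (f m)).prod)
        = ((n ! : k)⁻¹) •
            ∑ π : Equiv.Perm (Fin n), (List.ofFn fun m => ιUE k L (f (π m))).prod)
    (X Y : L) (n : ℕ) :
    (ιUE k L X) ^ n * ιUE k L Y
      = ∑ j ∈ Finset.range (n + 1),
          ((((n ! : ℚ) * ((-1) ^ j * bernoulli j)) / ((j ! : ℚ) * ((n - j)! : ℚ)) : ℚ) : k) •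
            σ ((ιSym k L X) ^ (n - j) * ιSym k L ((fun z => ⁅X, z⁆)^[j] Y)) := by
  classical
  set u := ιUE k L X with hu
  set g : ℕ → UniversalEnvelopingAlgebra k L :=
    fun r => ιUE k L ((fun z => ⁅X, z⁆)^[r] Y) with hg
  set c : ℕ → k := fun j =>
    ((((n ! : ℚ) * ((-1) ^ j * bernoulli j)) / ((j ! : ℚ) * ((n - j)! : ℚ)) : ℚ) : k) with hc
  set D : ℕ → ℕ → UniversalEnvelopingAlgebra k L := fun j i =>
    (c j * (((n - j + 1 : ℕ) : k))⁻¹ * ((((n - j + 1).choose (i - j + 1) : ℕ)) : k))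
      • (g i * u ^ (n - i)) with hD
  have step2 : ∀ j ∈ range (n+1),
      c j • σ ((ιSym k L X) ^ (n - j) * ιSym k L ((fun z => ⁅X, z⁆)^[j] Y))
      = ∑ i ∈ Ico j (n+1), D j i := by
    intro j hj
    rw [mem_range] at hj
    have hjn : j ≤ n := by omega
    rw [sym_eval k L σ hσ X _ (n-j), sum_pow_mul k L X _ (n-j)]
    have hterm : ∀ t ∈ range (n-j+1),
        ((n-j+1).choose (t+1)) •
          (ιUE k L ((fun w => ⁅X, w⁆)^[t] ((fun z => ⁅X, z⁆)^[j] Y)) * u ^ ((n-j) - t))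
        = ((((n - j + 1).choose ((j+t) - j + 1) : ℕ)) : k) • (g (j+t) * u ^ (n - (j+t))) := by
      intro t ht
      rw [mem_range] at ht
      have e1 : (fun w => ⁅X, w⁆)^[t] ((fun z => ⁅X, z⁆)^[j] Y)
          = (fun z => ⁅X, z⁆)^[j+t] Y := by
        rw [add_comm j t, Function.iterate_add_apply]
      have e2 : (j+t) - j + 1 = t + 1 := by omega
      have e3 : (n-j) - t = n - (j+t) := by omega
      rw [e1, e2, e3, Nat.cast_smul_eq_nsmul, hg]
    rw [Finset.sum_congr rfl hterm, Finset.smul_sum, Finset.smul_sum]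
    have hre : ∑ i ∈ Ico j (n+1), D j i = ∑ t ∈ range (n+1-j), D j (j+t) :=
      Finset.sum_Ico_eq_sum_range _ _ _
    have hnj : n + 1 - j = n - j + 1 := by omega
    rw [hre, hnj]
    refine Finset.sum_congr rfl (fun t ht => ?_)
    rw [hD, smul_smul, smul_smul]
  rw [pow_ue_mul k L X Y n]
  rw [Finset.sum_congr rfl step2]
  simp only [Finset.range_eq_Ico]
  rw [Finset.sum_Ico_Ico_comm 0 (n+1) D]
  refine Finset.sum_congr rfl (fun i hi => ?_)
  rw [Finset.mem_Ico] at hi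
  have hin : i ≤ n := by omega
  rw [← Finset.range_eq_Ico]
  have hsum : ∑ j ∈ range (i+1), D j i
      = (∑ j ∈ range (i+1),
          c j * (((n - j + 1 : ℕ) : k))⁻¹ * ((((n - j + 1).choose (i - j + 1) : ℕ)) : k))
        • (g i * u ^ (n - i)) := by
    rw [Finset.sum_smul]
  rw [hsum]
  have hscalar : (∑ j ∈ range (i+1),
        c j * (((n - j + 1 : ℕ) : k))⁻¹ * ((((n - j + 1).choose (i - j + 1) : ℕ)) : k))
      = ((n.choose i : ℕ) : k) := by
    have h1 : ∀ j ∈ range (i+1),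
        c j * (((n - j + 1 : ℕ) : k))⁻¹ * ((((n - j + 1).choose (i - j + 1) : ℕ)) : k)
        = (((((n ! : ℚ) * ((-1) ^ j * bernoulli j)) / ((j ! : ℚ) * ((n - j)! : ℚ))
            * (((n - j + 1 : ℕ) : ℚ))⁻¹ * (((n - j + 1).choose (i - j + 1) : ℕ) : ℚ)) : ℚ) : k) := by
      intro j hj
      rw [hc]
      push_cast
      ring
    rw [Finset.sum_congr rfl h1, ← Rat.cast_sum, coeff_identity n i hin]
    push_cast
    ring
  rw [hscalar, Nat.cast_smul_eq_nsmul]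


end
end

section
/- A formal bi-differential star product ⋆ on polynomials S(g) over the dual of a Lie algebra g, satisfying: (i) for homogeneous p of degree n and q of degree m, p ⋆ q - pq is a polynomial of degree at most n+m-1, and (ii) associativity, is uniquely determined by the values (X)^n ⋆ Y for all X, Y ∈ g and n ∈ ℕ. -/
open Finset

theorem superset_ie {n : ℕ} (B : Finset (Fin n)) :
    (∑ S ∈ (Finset.univ : Finset (Fin n)).powerset.filter (fun S => B ⊆ S),
      (-1 : ℤ) ^ (n - S.card)) = if B = univ then 1 else 0 := by
  classical
  have key : ∀ T ∈ (univ \ B).powerset, ((-1 : ℤ) ^ (n - (B ∪ T).card)) =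
      (-1) ^ ((univ \ B).card) * (-1) ^ T.card := by
    intro T hT
    rw [Finset.mem_powerset] at hT
    have hdisj : Disjoint B T := by
      refine Finset.disjoint_left.2 fun a haB haT => ?_
      exact (Finset.mem_sdiff.1 (hT haT)).2 haB
    have hcard : (B ∪ T).card = B.card + T.card := Finset.card_union_of_disjoint hdisj
    have h1 : (univ \ B).card = n - B.card := by
      rw [Finset.card_sdiff_of_subset (Finset.subset_univ B), Finset.card_univ, Fintype.card_fin]
    have hBn : B.card ≤ n := by
      simpa [Finset.card_univ] using Finset.card_le_card (Finset.subset_univ B)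
    have hTn : T.card ≤ (univ \ B).card := Finset.card_le_card hT
    rw [← pow_add, hcard, h1]
    have he : (n - #B) + #T = (n - (#B + #T)) + 2 * #T := by
      rw [h1] at hTn; omega
    rw [he, pow_add, pow_mul]
    simp
  rw [show (Finset.univ : Finset (Fin n)).powerset.filter (fun S => B ⊆ S)
      = (univ \ B).powerset.image (fun T => B ∪ T) from ?_]
  · rw [Finset.sum_image (fun T hT T' hT' h => ?inj)]
    case inj =>
      rw [Finset.mem_coe, Finset.mem_powerset] at hT hT'
      have : ∀ (T₀ : Finset (Fin n)), T₀ ⊆ univ \ B → (B ∪ T₀) \ B = T₀ := by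
        intro T₀ hT₀
        rw [Finset.union_sdiff_left]
        exact Finset.sdiff_eq_self_of_disjoint (Finset.disjoint_left.2
          fun a ha hb => (Finset.mem_sdiff.1 (hT₀ ha)).2 hb)
      rw [← this T hT, ← this T' hT', h]
    rw [Finset.sum_congr rfl key, ← Finset.mul_sum, Finset.sum_powerset_neg_one_pow_card]
    by_cases h : B = univ
    · simp [h]
    · have : univ \ B ≠ ∅ := by
        intro he
        exact h (Finset.eq_univ_of_forall fun a => by
          by_contra hc
          have : a ∈ univ \ B := Finset.mem_sdiff.2 ⟨Finset.mem_univ a, hc⟩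
          simp [he] at this)
      simp [h, this]
  · ext S
    simp only [Finset.mem_filter, Finset.mem_powerset, Finset.mem_image]
    constructor
    · rintro ⟨-, hBS⟩
      exact ⟨S \ B, Finset.sdiff_subset_sdiff (Finset.subset_univ S) le_rfl,
        by rw [Finset.union_sdiff_of_subset hBS]⟩
    · rintro ⟨T, hT, rfl⟩
      exact ⟨Finset.subset_univ _, Finset.subset_union_left⟩
open Finset

theorem inner_ie {n : ℕ} (x : Fin n → Fin n) :
    (∑ S ∈ (Finset.univ : Finset (Fin n)).powerset,
      if ∀ k, x k ∈ S then (-1 : ℤ) ^ (n - S.card) else 0)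
      = if Function.Surjective x then 1 else 0 := by
  classical
  have hcond : ∀ S : Finset (Fin n), (∀ k, x k ∈ S) ↔ Finset.image x univ ⊆ S := by
    intro S
    constructor
    · intro h y hy
      obtain ⟨k, -, rfl⟩ := Finset.mem_image.1 hy
      exact h k
    · intro h k
      exact h (Finset.mem_image.2 ⟨k, Finset.mem_univ k, rfl⟩)
  rw [Finset.sum_congr rfl (fun S _ => by rw [if_congr (hcond S) rfl rfl]),
    ← Finset.sum_filter, superset_ie]
  congr 1
  rw [eq_iff_iff]
  constructor
  · intro h y
    have : y ∈ Finset.image x univ := by rw [h]; exact Finset.mem_univ y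
    obtain ⟨k, -, hk⟩ := Finset.mem_image.1 this
    exact ⟨k, hk⟩
  · intro h
    refine Finset.eq_univ_of_forall fun y => ?_
    obtain ⟨k, hk⟩ := h y
    exact Finset.mem_image.2 ⟨k, Finset.mem_univ k, hk⟩

theorem polar_aux {A : Type*} [CommRing A] (n : ℕ) (v : Fin n → A) :
    (n.factorial : A) * ∏ k, v k
      = ∑ S ∈ (Finset.univ : Finset (Fin n)).powerset,
          ((-1 : ℤ) ^ (n - S.card) : ℤ) • (∑ k ∈ S, v k) ^ n := by
  classical
  have step1 : ∀ S ∈ (Finset.univ : Finset (Fin n)).powerset,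
      ((-1 : ℤ) ^ (n - S.card)) • (∑ k ∈ S, v k) ^ n
      = ∑ x ∈ Fintype.piFinset (fun _ : Fin n => (univ : Finset (Fin n))),
          if ∀ k, x k ∈ S then ((-1 : ℤ) ^ (n - S.card)) • ∏ k, v (x k) else 0 := by
    intro S _
    have hpow : (∑ k ∈ S, v k) ^ n = ∑ x ∈ Fintype.piFinset (fun _ : Fin n => S),
        ∏ k, v (x k) := by
      rw [← Finset.prod_univ_sum fun _ : Fin n => S]
      rw [Finset.prod_const, Finset.card_univ, Fintype.card_fin]
    rw [hpow, Finset.smul_sum, ← Finset.sum_filter]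
    congr 1
    ext x
    constructor
    · intro hx
      simp only [Finset.mem_filter, Fintype.mem_piFinset] at *
      exact ⟨fun k => Finset.mem_univ _, hx⟩
    · intro hx
      simp only [Finset.mem_filter, Fintype.mem_piFinset] at *
      exact hx.2
  rw [Finset.sum_congr rfl step1, Finset.sum_comm]
  have step2 : ∀ x ∈ Fintype.piFinset (fun _ : Fin n => (univ : Finset (Fin n))),
      (∑ S ∈ (Finset.univ : Finset (Fin n)).powerset,
        if ∀ k, x k ∈ S then ((-1 : ℤ) ^ (n - S.card)) • ∏ k, v (x k) else 0)
      = (if Function.Surjective x then (1:ℤ) else 0) • ∏ k, v (x k) := by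
    intro x _
    rw [← inner_ie x, Finset.sum_smul]
    refine Finset.sum_congr rfl fun S _ => ?_
    split <;> simp
  rw [Finset.sum_congr rfl step2]
  rw [Fintype.piFinset_univ]
  have step3 : ∑ x : Fin n → Fin n, (if Function.Surjective x then (1:ℤ) else 0) • ∏ k, v (x k)
      = ∑ x ∈ Finset.univ.filter (fun x : Fin n → Fin n => Function.Surjective x),
          ∏ k, v (x k) := by
    rw [Finset.sum_filter]
    refine Finset.sum_congr rfl fun x _ => ?_
    split <;> simp
  rw [step3]
  have himg : Finset.univ.filter (fun x : Fin n → Fin n => Function.Surjective x)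
      = Finset.univ.image (fun σ : Equiv.Perm (Fin n) => ⇑σ) := by
    ext x
    simp only [Finset.mem_filter, Finset.mem_univ, true_and, Finset.mem_image]
    constructor
    · intro h
      have hb : Function.Bijective x := Finite.surjective_iff_bijective.1 h
      exact ⟨Equiv.ofBijective x hb, rfl⟩
    · rintro ⟨σ, rfl⟩
      exact σ.surjective
  rw [himg, Finset.sum_image (fun a _ b _ h => by exact DFunLike.coe_injective h)]
  have : ∀ σ : Equiv.Perm (Fin n), ∏ k, v (σ k) = ∏ k, v k := fun σ => Equiv.prod_comp σ v
  rw [Finset.sum_congr rfl fun σ _ => this σ, Finset.sum_const, Finset.card_univ,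
    Fintype.card_perm, Fintype.card_fin, nsmul_eq_mul, Nat.cast_comm]
open Finset MvPolynomial

theorem monomial_eq_prod_X {d : ℕ} (s : Fin d →₀ ℕ) :
    ∃ (n : ℕ) (v : Fin n → Fin d),
      (monomial s (1 : ℝ)) = ∏ k, X (v k) := by
  classical
  induction s using Finsupp.induction with
  | zero => exact ⟨0, Fin.elim0, by simp [monomial_zero']⟩
  | single_add a b f hfa hb ih =>
    obtain ⟨n, v, hv⟩ := ih
    refine ⟨b + n, Fin.append (fun _ => a) v, ?_⟩
    rw [monomial_single_add, Fin.prod_univ_add, hv]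
    congr 1
    · simp [Fin.append_left, Finset.prod_const, Finset.card_univ]
    · exact Finset.prod_congr rfl fun i _ => by rw [Fin.append_right]

theorem span_pow_linear {d : ℕ} (p : MvPolynomial (Fin d) ℝ) :
    p ∈ Submodule.span ℝ {q : MvPolynomial (Fin d) ℝ |
      ∃ (X : MvPolynomial (Fin d) ℝ) (n : ℕ), X.IsHomogeneous 1 ∧ q = X ^ n} := by
  classical
  set Sp := Submodule.span ℝ {q : MvPolynomial (Fin d) ℝ |
      ∃ (X : MvPolynomial (Fin d) ℝ) (n : ℕ), X.IsHomogeneous 1 ∧ q = X ^ n} with hSp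
  rw [MvPolynomial.as_sum p]
  refine Submodule.sum_mem _ fun s _ => ?_
  have h1 : monomial s (coeff s p) = (coeff s p) • monomial s (1:ℝ) := by
    rw [MvPolynomial.smul_monomial, smul_eq_mul, mul_one]
  rw [h1]
  refine Submodule.smul_mem _ _ ?_
  obtain ⟨n, v, hv⟩ := monomial_eq_prod_X s
  rw [hv]
  have hpolar := polar_aux n (fun k => (X (v k) : MvPolynomial (Fin d) ℝ))
  have hne : ((n.factorial : ℝ)) ≠ 0 := Nat.cast_ne_zero.2 n.factorial_ne_zero
  have key : (∏ k, (X (v k) : MvPolynomial (Fin d) ℝ))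
      = (n.factorial : ℝ)⁻¹ • ∑ S ∈ (Finset.univ : Finset (Fin n)).powerset,
          ((-1 : ℤ) ^ (n - S.card) : ℤ) • (∑ k ∈ S, (X (v k) : MvPolynomial (Fin d) ℝ)) ^ n := by
    rw [← hpolar]
    have : (n.factorial : MvPolynomial (Fin d) ℝ) = C (n.factorial : ℝ) := by
      simp
    rw [this, ← MvPolynomial.smul_eq_C_mul, smul_smul, inv_mul_cancel₀ hne, one_smul]
  rw [key]
  refine Submodule.smul_mem _ _ (Submodule.sum_mem _ fun S _ => ?_)
  rw [← Int.cast_smul_eq_zsmul ℝ]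
  refine Submodule.smul_mem _ _ (Submodule.subset_span ?_)
  refine ⟨∑ k ∈ S, X (v k), n, ?_, rfl⟩
  exact MvPolynomial.IsHomogeneous.sum _ _ _ fun k _ => isHomogeneous_X ℝ (v k)
open Finset MvPolynomial

/-- A formal bi-differential star product `⋆ = ∑ εʲ Π_j` on polynomials over `g* ≅ ℝ^d`
satisfying (i) `p ⋆ q = pq +` terms of degree `≤ n+m-1` for homogeneous `p, q` of degrees
`n, m`, and (ii) associativity, is uniquely determined by the values `(X)^n ⋆ Y` for
linear `X, Y` and `n ∈ ℕ`. -/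
theorem star_product_determined_by_pow_star_linear {d : ℕ}
    (Pi1 Pi2 : ℕ → MvPolynomial (Fin d) ℝ →ₗ[ℝ] MvPolynomial (Fin d) ℝ →ₗ[ℝ]
      MvPolynomial (Fin d) ℝ)
    (h10 : ∀ p q, Pi1 0 p q = p * q)
    (h20 : ∀ p q, Pi2 0 p q = p * q)
    (h1deg : ∀ j, 1 ≤ j → ∀ (a b : ℕ) (p q : MvPolynomial (Fin d) ℝ),
      p.IsHomogeneous a → q.IsHomogeneous b →
      Pi1 j p q = 0 ∨ (Pi1 j p q).totalDegree < a + b)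
    (h2deg : ∀ j, 1 ≤ j → ∀ (a b : ℕ) (p q : MvPolynomial (Fin d) ℝ),
      p.IsHomogeneous a → q.IsHomogeneous b →
      Pi2 j p q = 0 ∨ (Pi2 j p q).totalDegree < a + b)
    (h1assoc : ∀ (n : ℕ) (p q r : MvPolynomial (Fin d) ℝ),
      ∑ j ∈ Finset.range (n + 1), Pi1 j (Pi1 (n - j) p q) r
        = ∑ j ∈ Finset.range (n + 1), Pi1 j p (Pi1 (n - j) q r))
    (h2assoc : ∀ (n : ℕ) (p q r : MvPolynomial (Fin d) ℝ),
      ∑ j ∈ Finset.range (n + 1), Pi2 j (Pi2 (n - j) p q) r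
        = ∑ j ∈ Finset.range (n + 1), Pi2 j p (Pi2 (n - j) q r))
    (hagree : ∀ X Y : MvPolynomial (Fin d) ℝ, X.IsHomogeneous 1 → Y.IsHomogeneous 1 →
      ∀ (n j : ℕ), Pi1 j (X ^ n) Y = Pi2 j (X ^ n) Y) :
    Pi1 = Pi2 := by
  classical
  funext N
  induction N using Nat.strong_induction_on with
  | _ N IH =>
  rcases N with _ | M
  · exact LinearMap.ext fun p => LinearMap.ext fun q => by rw [h10, h20]
  -- inductive step
  set D := Pi1 (M + 1) - Pi2 (M + 1) with hDdef
  have hD : ∀ p q, D p q = Pi1 (M + 1) p q - Pi2 (M + 1) p q := by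
    intro p q; simp [hDdef]
  have expand : ∀ (P : ℕ → MvPolynomial (Fin d) ℝ →ₗ[ℝ] MvPolynomial (Fin d) ℝ →ₗ[ℝ]
        MvPolynomial (Fin d) ℝ),
      (∀ p q, P 0 p q = p * q) →
      (∀ (n : ℕ) (p q r : MvPolynomial (Fin d) ℝ),
        ∑ j ∈ Finset.range (n + 1), P j (P (n - j) p q) r
          = ∑ j ∈ Finset.range (n + 1), P j p (P (n - j) q r)) →
      (∀ j, j < M + 1 → P j = Pi2 j) →
      ∀ p q r : MvPolynomial (Fin d) ℝ,
        P (M + 1) (p * q) r + P (M + 1) p q * r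
            + ∑ j ∈ Finset.range M, Pi2 (j + 1) (Pi2 (M - j) p q) r
          = P (M + 1) p (q * r) + p * P (M + 1) q r
            + ∑ j ∈ Finset.range M, Pi2 (j + 1) p (Pi2 (M - j) q r) := by
    intro P hP0 hPassoc hPIH p q r
    have h := hPassoc (M + 1) p q r
    rw [Finset.sum_range_succ (fun j => P j (P (M + 1 - j) p q) r) (M + 1),
      Finset.sum_range_succ (fun j => P j p (P (M + 1 - j) q r)) (M + 1),
      Finset.sum_range_succ' (fun j => P j (P (M + 1 - j) p q) r) M,
      Finset.sum_range_succ' (fun j => P j p (P (M + 1 - j) q r)) M] at h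
    simp only [Nat.sub_self, Nat.sub_zero, Nat.succ_sub_succ] at h
    rw [hP0, hP0, hP0, hP0] at h
    have c1 : ∑ j ∈ Finset.range M, P (j + 1) (P (M - j) p q) r
        = ∑ j ∈ Finset.range M, Pi2 (j + 1) (Pi2 (M - j) p q) r :=
      Finset.sum_congr rfl fun j hj => by
        rw [hPIH (j + 1) (by rw [Finset.mem_range] at hj; omega), hPIH (M - j) (by omega)]
    have c2 : ∑ j ∈ Finset.range M, P (j + 1) p (P (M - j) q r)
        = ∑ j ∈ Finset.range M, Pi2 (j + 1) p (Pi2 (M - j) q r) :=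
      Finset.sum_congr rfl fun j hj => by
        rw [hPIH (j + 1) (by rw [Finset.mem_range] at hj; omega), hPIH (M - j) (by omega)]
    rw [c1, c2] at h
    linear_combination h
  have e1 := expand Pi1 h10 h1assoc (fun j hj => IH j hj)
  have e2 := expand Pi2 h20 h2assoc (fun j _ => rfl)
  have hco : ∀ p q r : MvPolynomial (Fin d) ℝ,
      D (p * q) r + D p q * r = D p (q * r) + p * D q r := by
    intro p q r
    rw [hD, hD, hD, hD]
    linear_combination e1 p q r - e2 p q r
  have hD11 : D 1 1 = 0 := by
    have a1 : Pi1 (M + 1) 1 1 = 0 := by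
      rcases h1deg (M + 1) (by omega) 0 0 1 1 (isHomogeneous_one _ _)
        (isHomogeneous_one _ _) with h | h
      · exact h
      · exact absurd h (by omega)
    have a2 : Pi2 (M + 1) 1 1 = 0 := by
      rcases h2deg (M + 1) (by omega) 0 0 1 1 (isHomogeneous_one _ _)
        (isHomogeneous_one _ _) with h | h
      · exact h
      · exact absurd h (by omega)
    rw [hD, a1, a2, sub_zero]
  have hDp1 : ∀ p : MvPolynomial (Fin d) ℝ, D p 1 = 0 := by
    intro p
    have h := hco p 1 1
    rw [mul_one, mul_one, one_mul, hD11, mul_zero, add_zero] at h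
    linear_combination h
  have hDY : ∀ Y : MvPolynomial (Fin d) ℝ, Y.IsHomogeneous 1 →
      ∀ p, D p Y = 0 := by
    intro Y hY p
    have hsub : Submodule.span ℝ {q : MvPolynomial (Fin d) ℝ |
        ∃ (X : MvPolynomial (Fin d) ℝ) (n : ℕ), X.IsHomogeneous 1 ∧ q = X ^ n}
        ≤ LinearMap.ker (D.flip Y) := by
      rw [Submodule.span_le]
      rintro q ⟨Xl, n, hX, rfl⟩
      simp only [SetLike.mem_coe, LinearMap.mem_ker, LinearMap.flip_apply]
      rw [hD, hagree Xl Y hX hY n (M + 1), sub_self]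
    have hm := hsub (span_pow_linear p)
    simpa only [LinearMap.mem_ker, LinearMap.flip_apply] using hm
  have hmono : ∀ m, ∀ q : MvPolynomial (Fin d) ℝ, q.IsHomogeneous m →
      ∀ p, D p q = 0 := by
    intro m
    induction m with
    | zero =>
      intro q hq p
      rw [MvPolynomial.as_sum q, map_sum]
      refine Finset.sum_eq_zero fun s hs => ?_
      have hs0 : s = 0 := by
        have hw := hq (MvPolynomial.mem_support_iff.1 hs)
        change Finsupp.weight (fun _ => 1) s = 0 at hw
        rw [← Finsupp.degree_eq_weight_one] at hw
        exact (Finsupp.degree_eq_zero_iff s).1 hw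
      subst hs0
      have hmon : (monomial 0 (coeff 0 q) : MvPolynomial (Fin d) ℝ)
          = (coeff 0 q) • 1 := by
        rw [MvPolynomial.monomial_zero', MvPolynomial.smul_eq_C_mul, mul_one]
      rw [hmon, map_smul, hDp1, smul_zero]
    | succ m ihm =>
      intro q hq p
      rw [MvPolynomial.as_sum q, map_sum]
      refine Finset.sum_eq_zero fun s hs => ?_
      have hdeg : Finsupp.degree s = m + 1 := by
        rw [Finsupp.degree_eq_weight_one]
        exact hq (MvPolynomial.mem_support_iff.1 hs)
      have hex : ∃ i, s i ≠ 0 := by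
        by_contra hno
        push_neg at hno
        have : s = 0 := by ext a; exact hno a
        rw [this, map_zero] at hdeg
        omega
      obtain ⟨i, hi⟩ := hex
      set s' := s - Finsupp.single i 1 with hs'
      have hsum : Finsupp.single i 1 + s' = s := by
        ext a
        simp only [Finsupp.add_apply, Finsupp.tsub_apply, Finsupp.single_apply, hs']
        split_ifs with hia
        · subst hia; omega
        · omega
      have hdeg' : Finsupp.degree s' = m := by
        have h1 : (Finsupp.weight (1 : Fin d → ℕ)) s
            = (Finsupp.weight (1 : Fin d → ℕ)) (Finsupp.single i 1)
              + (Finsupp.weight (1 : Fin d → ℕ)) s' := by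
          rw [← hsum, map_add]
        have h2 : (Finsupp.weight (1 : Fin d → ℕ)) (Finsupp.single i 1) = 1 := by
          simp [Finsupp.weight_apply, Finsupp.sum_single_index]
        have h3 : (Finsupp.weight (1 : Fin d → ℕ)) s = m + 1 := by
          change Finsupp.weight (fun _ => 1) s = m + 1
          rw [← Finsupp.degree_eq_weight_one]; exact hdeg
        rw [Finsupp.degree_eq_weight_one]
        change Finsupp.weight (1 : Fin d → ℕ) s' = m
        omega
      have hfac : (monomial s (coeff s q) : MvPolynomial (Fin d) ℝ)
          = X i * monomial s' (coeff s q) := by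
        rw [← hsum, monomial_single_add, pow_one]

      have hs'hom : (monomial s' (coeff s q) : MvPolynomial (Fin d) ℝ).IsHomogeneous m :=
        isHomogeneous_monomial _ hdeg'
      rw [hfac]
      have h := hco p (X i) (monomial s' (coeff s q))
      rw [hDY (X i) (isHomogeneous_X ℝ i) p, ihm _ hs'hom (p * X i),
        ihm _ hs'hom (X i)] at h
      linear_combination -h
  refine LinearMap.ext fun p => LinearMap.ext fun q => ?_
  have h0 : D p q = 0 := by
    rw [← MvPolynomial.sum_homogeneousComponent q, map_sum]
    exact Finset.sum_eq_zero fun i _ =>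
      hmono i _ (homogeneousComponent_isHomogeneous i q) p
  rw [hD] at h0
  exact sub_eq_zero.1 h0
end
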